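/- Let M, a, s be positive integers with M > 1 such that ∑_{i=0}^{M-1} (a+i)^2 = s^2, and suppose M = 12·m₁ + 11 for a nonnegative integer m₁. Then for every prime p > 3 with p ≡ 3 (mod 4), there do not exist integers i ≥ 0 and q ≥ 1 with p ∤ q such that m₁ + 1 = p^(2i+1)·q; equivalently, the exact power of p dividing M + 1 = 12·(m₁ + 1) is even. -/

import Mathlib

lemma sum6 (a : ℤ) : ∀ M : ℕ, 6 * ∑ i ∈ Finset.range M, (a + (i:ℤ))^2
    = 6*(M:ℤ)*a^2 + 6*a*M*((M:ℤ)-1) + M*((M:ℤ)-1)*(2*M-1) := by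
  intro M
  induction M with
  | zero => simp
  | succ n ih =>
      rw [Finset.sum_range_succ, mul_add]
      push_cast
      push_cast at ih
      linear_combination ih

lemma step (p M A e : ℕ) (hp : p.Prime) (hp4 : p % 4 = 3) (hpM : p ∣ M + 1) (s b : ℕ)
    (h : s^2 = M*b^2 + A*p^(e+1)) : p ∣ s ∧ p ∣ b := by
  haveI : Fact p.Prime := ⟨hp⟩
  have hz : ((s:ZMod p))^2 = (M:ZMod p)*(b:ZMod p)^2 + (A:ZMod p)*(p:ZMod p)^(e+1) := by
    exact_mod_cast congrArg (Nat.cast : ℕ → ZMod p) h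
  have hp0 : (p : ZMod p) = 0 := ZMod.natCast_self p
  have hM1 : (M : ZMod p) = -1 := by
    have : ((M+1 : ℕ) : ZMod p) = 0 := (ZMod.natCast_eq_zero_iff _ _).mpr hpM
    push_cast at this
    linear_combination this
  have hs2 : ((s:ZMod p))^2 = -((b:ZMod p))^2 := by
    rw [hM1, hp0] at hz
    rw [hz]
    ring
  have hb : p ∣ b := by
    by_contra hb
    have hb0 : (b : ZMod p) ≠ 0 := fun h0 =>
      hb ((ZMod.natCast_eq_zero_iff _ _).mp h0)
    have hsq : ((s:ZMod p) * (b:ZMod p)⁻¹)^2 = -1 := by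
      field_simp
      linear_combination hs2
    have : IsSquare (-1 : ZMod p) := ⟨(s:ZMod p) * (b:ZMod p)⁻¹, by rw [← hsq]; ring⟩
    exact (ZMod.exists_sq_eq_neg_one_iff.mp this) hp4
  refine ⟨?_, hb⟩
  have hb0 : (b : ZMod p) = 0 := (ZMod.natCast_eq_zero_iff _ _).mpr hb
  have : ((s:ZMod p))^2 = 0 := by rw [hs2, hb0]; ring
  have hs0 : (s : ZMod p) = 0 := by
    have := pow_eq_zero_iff (n := 2) (by norm_num) |>.mp this
    exact this
  exact (ZMod.natCast_eq_zero_iff _ _).mp hs0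

lemma key (p M A : ℕ) (hp : p.Prime) (hp4 : p % 4 = 3) (hpM : p ∣ M + 1)
    (hpA : ¬ p ∣ A) : ∀ i : ℕ, ∀ s b : ℕ, s^2 ≠ M * b^2 + A * p^(2*i+1) := by
  intro i
  induction i with
  | zero =>
      intro s b h
      obtain ⟨hps, hpb⟩ := step p M A (2*0) hp hp4 hpM s b h
      obtain ⟨s', rfl⟩ := hps
      obtain ⟨b', rfl⟩ := hpb
      have h1 : p * p ∣ A * p := by
        have d1 : p * p ∣ (p*s')^2 := ⟨s'*s', by ring⟩
        have d2 : p * p ∣ M*(p*b')^2 := ⟨M*(b'*b'), by ring⟩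
        have hap : A * p = (p*s')^2 - M*(p*b')^2 := by
          norm_num at h
          omega
        rw [hap]
        exact Nat.dvd_sub d1 d2
      obtain ⟨k, hk⟩ := h1
      have : A = p * k := Nat.eq_of_mul_eq_mul_right hp.pos (by rw [hk]; ring)
      exact hpA ⟨k, this⟩
  | succ n ih =>
      intro s b h
      obtain ⟨hps, hpb⟩ := step p M A (2*(n+1)) hp hp4 hpM s b h
      obtain ⟨s', rfl⟩ := hps
      obtain ⟨b', rfl⟩ := hpb
      have h2 : p^2 * s'^2 = p^2 * (M*b'^2 + A*p^(2*n+1)) := by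
        have e1 : (p*s')^2 = p^2*s'^2 := by ring
        have e2 : M*(p*b')^2 + A*p^(2*(n+1)+1) = p^2*(M*b'^2 + A*p^(2*n+1)) := by ring
        rw [← e1, ← e2]
        exact h
      exact ih s' b' (Nat.eq_of_mul_eq_mul_left (pow_pos hp.pos 2) h2)

theorem stmt (M a s m₁ : ℕ) (hM : 1 < M) (ha : 1 ≤ a) (hs : 1 ≤ s)
    (hsum : ∑ i ∈ Finset.range M, (a + i) ^ 2 = s ^ 2)
    (hMeq : M = 12 * m₁ + 11) :
    ∀ p : ℕ, p.Prime → 3 < p → p % 4 = 3 →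
      ¬ ∃ i q : ℕ, 1 ≤ q ∧ ¬ p ∣ q ∧ m₁ + 1 = p ^ (2 * i + 1) * q := by
  subst hMeq
  rintro p hp hp3 hp4 ⟨i, q, hq1, hpq, hmq⟩
  -- algebraic identity
  have hsZ : (∑ j ∈ Finset.range (12*m₁+11), ((a:ℤ) + (j:ℤ))^2) = (s:ℤ)^2 := by
    exact_mod_cast congrArg (Nat.cast : ℕ → ℤ) hsum
  have h6 := sum6 (a:ℤ) (12*m₁+11)
  rw [hsZ] at h6
  push_cast at h6
  have hfinZ : (6:ℤ) * ((s^2 : ℕ) : ℤ)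
      = 6 * (((12*m₁+11)*(a+6*m₁+5)^2 + (12*m₁+11)*(12*m₁+10)*(m₁+1) : ℕ) : ℤ) := by
    push_cast
    linear_combination h6
  have hfin : s^2 = (12*m₁+11)*(a+6*m₁+5)^2 + (12*m₁+11)*(12*m₁+10)*(m₁+1) :=
    Nat.cast_injective (mul_left_cancel₀ (by norm_num : (6:ℤ) ≠ 0) hfinZ)
  rw [hmq] at hfin
  -- divisibility facts
  have hpM1 : p ∣ (12*m₁+11) + 1 := by
    rw [show (12*m₁+11)+1 = 12*(m₁+1) from by ring, hmq]
    exact Dvd.dvd.mul_left (dvd_mul_of_dvd_left (dvd_pow_self p (by omega)) q) 12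
  have hpA : ¬ p ∣ (12*m₁+11)*(12*m₁+10)*q := by
    intro hd
    rcases (Nat.Prime.dvd_mul hp).mp hd with hd2 | hd2
    · rcases (Nat.Prime.dvd_mul hp).mp hd2 with hd3 | hd3
      · have := Nat.dvd_sub hpM1 hd3
        simp at this
        omega
      · have := Nat.dvd_sub hpM1 hd3
        have h2 : p ∣ 2 := by
          have e : (12*m₁+11) + 1 - (12*m₁+10) = 2 := by omega
          rwa [e] at this
        have := Nat.le_of_dvd (by norm_num) h2
        omega
    · exact hpq hd2
  exact key p (12*m₁+11) ((12*m₁+11)*(12*m₁+10)*q) hp hp4 hpM1 hpA i s (a+6*m₁+5)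
    (by rw [hfin]; ring)
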